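/- The 2-form ω = 𝒱_{abc}(ξ) dξ^a ∧ dρ^{bc} is exact: ω = d χ where χ = 𝒱_{ab}(ξ) dρ^{ab}, with 𝒱_{ab}(ξ) = (1/(n−2)!) ε_{a b c₁…c_{n−2}} ξ^{c₁}⋯ξ^{c_{n−2}}. -/

import Mathlib

open scoped BigOperators

/-- The Levi-Civita symbol `ε_{g(0) … g(n-1)}`. -/
noncomputable def eps {n : ℕ} (g : Fin n → Fin n) : ℝ :=
  ∑ σ : Equiv.Perm (Fin n),
    if (σ : Fin n → Fin n) = g then ((Equiv.Perm.sign σ : ℤ) : ℝ) else 0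

def cat3 {n : ℕ} (a b c : Fin n) (f : Fin (n - 3) → Fin n) : Fin n → Fin n :=
  fun i =>
    if i.val = 0 then a
    else if i.val = 1 then b
    else if i.val = 2 then c
    else if h : i.val - 3 < n - 3 then f ⟨i.val - 3, h⟩ else a

def cat2 {n : ℕ} (a b : Fin n) (f : Fin (n - 2) → Fin n) : Fin n → Fin n :=
  fun i =>
    if i.val = 0 then a
    else if i.val = 1 then b
    else if h : i.val - 2 < n - 2 then f ⟨i.val - 2, h⟩ else a

/-- `𝒱_{abc}(ξ)`. -/
noncomputable def Vthree {n : ℕ} {A : Type*} [Ring A] [Algebra ℝ A]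
    (ξ : Fin n → A) (a b c : Fin n) : A :=
  ((Nat.factorial (n - 3) : ℝ))⁻¹ •
    ∑ f : Fin (n - 3) → Fin n,
      eps (cat3 a b c f) • (List.ofFn fun j => ξ (f j)).prod

/-- `𝒱_{ab}(ξ) = (1/(n-2)!) ε_{ab c₁…c_{n-2}} ξ^{c₁} ⋯ ξ^{c_{n-2}}`. -/
noncomputable def Vtwo {n : ℕ} {A : Type*} [Ring A] [Algebra ℝ A]
    (ξ : Fin n → A) (a b : Fin n) : A :=
  ((Nat.factorial (n - 2) : ℝ))⁻¹ •
    ∑ f : Fin (n - 2) → Fin n,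
      eps (cat2 a b f) • (List.ofFn fun j => ξ (f j)).prod

lemma Vtwo_cast {n k : ℕ} (hk2 : n - 2 = k + 1) {A : Type*} [Ring A] [Algebra ℝ A]
    (ξ : Fin n → A) (a b : Fin n) :
    Vtwo ξ a b = (((k+1).factorial : ℝ))⁻¹ •
      ∑ f : Fin (k+1) → Fin n,
        eps (cat2 a b (f ∘ Fin.cast hk2)) • (List.ofFn fun j => ξ (f j)).prod := by
  unfold Vtwo
  have h1 : ((n-2).factorial : ℝ) = (((k+1).factorial : ℝ)) := by rw [hk2]
  rw [h1]
  congr 1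
  apply Fintype.sum_equiv (Equiv.arrowCongr (finCongr hk2) (Equiv.refl (Fin n)))
  intro F
  have h2 : ((Equiv.arrowCongr (finCongr hk2) (Equiv.refl (Fin n))) F) ∘ Fin.cast hk2 = F := by
    funext x
    simp [Equiv.arrowCongr]
  rw [h2]
  congr 1
  exact congrArg List.prod
    (by rw [List.ofFn_congr hk2 (fun j => ξ (F j))]; simp [Equiv.arrowCongr, finCongr])

lemma Vthree_cast {n k : ℕ} (hk3 : n - 3 = k) {A : Type*} [Ring A] [Algebra ℝ A]
    (ξ : Fin n → A) (a b c : Fin n) :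
    Vthree ξ a b c = ((k.factorial : ℝ))⁻¹ •
      ∑ g : Fin k → Fin n,
        eps (cat3 a b c (g ∘ Fin.cast hk3)) • (List.ofFn fun j => ξ (g j)).prod := by
  unfold Vthree
  have h1 : ((n-3).factorial : ℝ) = ((k.factorial : ℝ)) := by rw [hk3]
  rw [h1]
  congr 1
  apply Fintype.sum_equiv (Equiv.arrowCongr (finCongr hk3) (Equiv.refl (Fin n)))
  intro F
  have h2 : ((Equiv.arrowCongr (finCongr hk3) (Equiv.refl (Fin n))) F) ∘ Fin.cast hk3 = F := by
    funext x
    simp [Equiv.arrowCongr]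
  rw [h2]
  congr 1
  exact congrArg List.prod
    (by rw [List.ofFn_congr hk3 (fun j => ξ (F j))]; simp [Equiv.arrowCongr, finCongr])


lemma eps_comp_perm {n : ℕ} (g : Fin n → Fin n) (τ : Equiv.Perm (Fin n)) :
    eps (g ∘ τ) = ((Equiv.Perm.sign τ : ℤ) : ℝ) * eps g := by
  unfold eps
  rw [← Equiv.sum_comp (Equiv.mulRight τ)
    (fun σ : Equiv.Perm (Fin n) => if (σ : Fin n → Fin n) = g ∘ τ then ((Equiv.Perm.sign σ : ℤ) : ℝ) else 0)]
  rw [Finset.mul_sum]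
  apply Finset.sum_congr rfl
  intro σ _
  have hcond : ((Equiv.mulRight τ σ : Equiv.Perm (Fin n)) : Fin n → Fin n) = g ∘ τ ↔ (σ : Fin n → Fin n) = g := by
    constructor
    · intro h
      funext x
      have := congrFun h (τ.symm x)
      simpa using this
    · intro h
      funext x
      simpa using congrFun h (τ x)
  rw [if_congr hcond rfl rfl]
  by_cases h : (σ : Fin n → Fin n) = g
  · simp only [h, if_true]
    have : Equiv.Perm.sign (Equiv.mulRight τ σ) = Equiv.Perm.sign σ * Equiv.Perm.sign τ := by
      simp [Equiv.mulRight, map_mul]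
    rw [this]
    push_cast
    ring
  · simp [h]


lemma dQ {n : ℕ} {A : Type*} [Ring A] [Algebra ℝ A] (ξ : Fin n → A) (Dξ : Fin n → A)
    (d : A →ₗ[ℝ] A)
    (hDξc : ∀ a x, Dξ a * x = x * Dξ a)
    (hdLξ : ∀ a x, d (ξ a * x) = Dξ a * x - ξ a * d x) :
    ∀ (m : ℕ) (f : Fin (m + 1) → Fin n) (y : A), d y = 0 →
      d ((List.ofFn fun j => ξ (f j)).prod * y)
        = ∑ j : Fin (m + 1), ((-1 : ℝ) ^ (j : ℕ)) •
            (Dξ (f j) * ((List.ofFn fun i => ξ (f (j.succAbove i))).prod * y)) := by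
  have hcomm : ∀ (c : Fin n) (x z : A), x * (Dξ c * z) = Dξ c * (x * z) := by
    intro c x z
    rw [hDξc c (x * z), mul_assoc, ← hDξc c z]
  intro m
  induction m with
  | zero =>
    intro f y hy
    simp only [List.ofFn_succ, List.ofFn_zero, List.prod_cons, List.prod_nil, mul_one]
    rw [hdLξ, hy, mul_zero, sub_zero]
    simp
  | succ m ih =>
    intro f y hy
    have step : (List.ofFn fun j : Fin (m + 2) => ξ (f j)).prod
        = ξ (f 0) * (List.ofFn fun j : Fin (m + 1) => ξ (f j.succ)).prod := by
      rw [List.ofFn_succ]; simp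
    rw [step, mul_assoc, hdLξ, ih (fun j => f j.succ) y hy]
    conv_rhs => rw [Fin.sum_univ_succ]
    have h0 : ((0 : Fin (m + 2)).succAbove : Fin (m+1) → Fin (m+2)) = Fin.succ := by
      funext i; simp
    have hterm : ∀ j : Fin (m + 1),
        ξ (f 0) * (((-1 : ℝ) ^ (j : ℕ)) •
          (Dξ (f j.succ) * ((List.ofFn fun i => ξ (f (j.succAbove i).succ)).prod * y)))
        = - (((-1 : ℝ) ^ ((j.succ : Fin (m+2)) : ℕ)) •
          (Dξ (f j.succ) * ((List.ofFn fun i : Fin (m+1) => ξ (f (j.succ.succAbove i))).prod * y))) := by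
      intro j
      have hlist : (List.ofFn fun i : Fin (m+1) => ξ (f (j.succ.succAbove i)))
          = ξ (f 0) :: (List.ofFn fun i : Fin m => ξ (f (j.succAbove i).succ)) := by
        rw [List.ofFn_succ]
        congr 1
        · simp
      rw [hlist, List.prod_cons, Fin.val_succ, pow_succ]
      rw [mul_smul_comm]
      rw [mul_assoc, hcomm]
      module
    calc Dξ (f 0) * ((List.ofFn fun j : Fin (m+1) => ξ (f j.succ)).prod * y)
          - ξ (f 0) * ∑ j : Fin (m+1), ((-1:ℝ)^(j:ℕ)) •
              (Dξ (f j.succ) * ((List.ofFn fun i => ξ (f (j.succAbove i).succ)).prod * y))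
        = Dξ (f 0) * ((List.ofFn fun j : Fin (m+1) => ξ (f j.succ)).prod * y)
          + ∑ j : Fin (m+1), ((-1:ℝ)^((j.succ : Fin (m+2)) : ℕ)) •
              (Dξ (f j.succ) * ((List.ofFn fun i : Fin (m+1) => ξ (f (j.succ.succAbove i))).prod * y)) := by
          rw [sub_eq_add_neg, Finset.mul_sum, ← Finset.sum_neg_distrib]
          congr 1
          apply Finset.sum_congr rfl
          intro j _
          rw [hterm j]; exact neg_neg _
      _ = ((-1:ℝ)^(((0 : Fin (m+2))) : ℕ)) •
            (Dξ (f 0) * ((List.ofFn fun i => ξ (f ((0 : Fin (m+2)).succAbove i))).prod * y))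
          + ∑ j : Fin (m+1), ((-1:ℝ)^((j.succ : Fin (m+2)) : ℕ)) •
              (Dξ (f j.succ) * ((List.ofFn fun i : Fin (m+1) => ξ (f (j.succ.succAbove i))).prod * y)) := by
          rw [h0]; simp


lemma cat2_val0 {n : ℕ} (p q : Fin n) (F : Fin (n-2) → Fin n) (i : Fin n) (h : i.val = 0) :
    cat2 p q F i = p := by unfold cat2; rw [if_pos h]

lemma cat2_val1 {n : ℕ} (p q : Fin n) (F : Fin (n-2) → Fin n) (i : Fin n) (h : i.val = 1) :
    cat2 p q F i = q := by unfold cat2; rw [if_neg (by omega), if_pos h]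

lemma cat2_ge {n : ℕ} (p q : Fin n) (F : Fin (n-2) → Fin n) (i : Fin n) (h : 2 ≤ i.val)
    (h2 : i.val - 2 < n - 2) : cat2 p q F i = F ⟨i.val - 2, h2⟩ := by
  unfold cat2; rw [if_neg (by omega), if_neg (by omega), dif_pos h2]

lemma cat3_val0 {n : ℕ} (a p q : Fin n) (F : Fin (n-3) → Fin n) (i : Fin n) (h : i.val = 0) :
    cat3 a p q F i = a := by unfold cat3; rw [if_pos h]

lemma cat3_val1 {n : ℕ} (a p q : Fin n) (F : Fin (n-3) → Fin n) (i : Fin n) (h : i.val = 1) :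
    cat3 a p q F i = p := by unfold cat3; rw [if_neg (by omega), if_pos h]

lemma cat3_val2 {n : ℕ} (a p q : Fin n) (F : Fin (n-3) → Fin n) (i : Fin n) (h : i.val = 2) :
    cat3 a p q F i = q := by unfold cat3; rw [if_neg (by omega), if_neg (by omega), if_pos h]

lemma cat3_ge {n : ℕ} (a p q : Fin n) (F : Fin (n-3) → Fin n) (i : Fin n) (h : 3 ≤ i.val)
    (h3 : i.val - 3 < n - 3) : cat3 a p q F i = F ⟨i.val - 3, h3⟩ := by
  unfold cat3; rw [if_neg (by omega), if_neg (by omega), if_neg (by omega), dif_pos h3]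

lemma cat2_cycle {n k : ℕ} (hk2 : n - 2 = k + 1) (hk3 : n - 3 = k) (hn : 3 ≤ n)
    (p q : Fin n) (f : Fin (k + 1) → Fin n) (j : Fin (k + 1)) :
    cat2 p q (f ∘ Fin.cast hk2) =
      (cat3 (f j) p q ((fun i => f (j.succAbove i)) ∘ Fin.cast hk3)) ∘
        ⇑(Fin.cycleRange (⟨j.val + 2, by omega⟩ : Fin n)) := by
  cases n with
  | zero => omega
  | succ N =>
    have hj : j.val ≤ k := by omega
    set c : Fin (N+1) := ⟨j.val + 2, by omega⟩ with hcdef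
    funext i
    show cat2 p q (f ∘ Fin.cast hk2) i = cat3 _ p q _ (Fin.cycleRange c i)
    rcases lt_trichotomy i.val (j.val + 2) with hlt | heq | hgt
    · have hic : i < c := by simp [Fin.lt_def, hcdef]; omega
      have hv : (Fin.cycleRange c i).val = i.val + 1 := Fin.coe_cycleRange_of_lt hic
      rcases Nat.lt_or_ge i.val 2 with h2 | h2
      · interval_cases h : i.val
        · rw [cat2_val0 _ _ _ _ h, cat3_val1 _ _ _ _ _ (by omega)]
        · rw [cat2_val1 _ _ _ _ h, cat3_val2 _ _ _ _ _ (by omega)]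
      · have hb2 : i.val - 2 < N + 1 - 2 := by omega
        have hb3 : (Fin.cycleRange c i).val - 3 < N + 1 - 3 := by omega
        rw [cat2_ge _ _ _ _ h2 hb2, cat3_ge _ _ _ _ _ (by omega) hb3]
        show f _ = f (j.succAbove _)
        have hcast : Fin.cast hk3 ⟨(Fin.cycleRange c i).val - 3, hb3⟩
            = (⟨i.val - 2, by omega⟩ : Fin k) := by
          apply Fin.ext; simp [hv]
        rw [hcast]
        rw [Fin.succAbove_of_castSucc_lt _ _ (by simp [Fin.lt_def]; omega)]
        apply congrArg
        apply Fin.ext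
        simp
    · have hic : i = c := Fin.ext heq
      rw [hic, Fin.cycleRange_self, cat3_val0 _ _ _ _ _ rfl]
      have hb2 : c.val - 2 < N + 1 - 2 := by omega
      rw [cat2_ge _ _ _ _ (by simp [hcdef]) hb2]
      show f _ = f j
      apply congrArg
      apply Fin.ext
      simp [hcdef]
    · have hic : c < i := by simp [Fin.lt_def, hcdef]; omega
      rw [Fin.cycleRange_of_gt hic]
      have hb2 : i.val - 2 < N + 1 - 2 := by omega
      have hb3 : i.val - 3 < N + 1 - 3 := by omega
      rw [cat2_ge _ _ _ _ (by omega) hb2, cat3_ge _ _ _ _ _ (by omega) hb3]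
      show f _ = f (j.succAbove _)
      rw [Fin.succAbove_of_le_castSucc _ _ (by simp [Fin.le_def]; omega)]
      apply congrArg
      apply Fin.ext
      simp
      omega


lemma eps_sign {n k : ℕ} (hk2 : n - 2 = k + 1) (hk3 : n - 3 = k) (hn : 3 ≤ n)
    (p q : Fin n) (f : Fin (k+1) → Fin n) (j : Fin (k+1)) :
    eps (cat2 p q (f ∘ Fin.cast hk2)) * (-1:ℝ)^(j:ℕ)
      = eps (cat3 (f j) p q ((fun i => f (j.succAbove i)) ∘ Fin.cast hk3)) := by
  rw [cat2_cycle hk2 hk3 hn p q f j, eps_comp_perm]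
  have hs : ((Equiv.Perm.sign (Fin.cycleRange (⟨j.val + 2, by omega⟩ : Fin n)) : ℤ) : ℝ)
      = (-1:ℝ)^((j:ℕ)+2) := by
    rw [Fin.sign_cycleRange]
    push_cast
    norm_num
  rw [hs]
  have hsq : ((-1:ℝ))^(j:ℕ) * ((-1:ℝ))^(j:ℕ) = 1 := by
    rw [← pow_add]; exact Even.neg_one_pow ⟨(j:ℕ), by ring⟩
  have h2 : ((-1:ℝ))^((j:ℕ)+2) = (-1:ℝ)^(j:ℕ) := by rw [pow_add]; ring
  rw [h2]
  linear_combination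
    eps (cat3 (f j) p q ((fun i => f (j.succAbove i)) ∘ Fin.cast hk3)) * hsq


/-- the 2-form `ω = 𝒱_{abc}(ξ) dξ^a ∧ dρ^{bc}` is exact:
`ω = dχ` for the presymplectic potential `χ = 𝒱_{ab}(ξ) dρ^{ab}`.
The graded de Rham complex of `g[1]` is modelled as in Statement 2. -/
theorem presymplectic_form_exact
    (n : ℕ) (hn : 3 ≤ n) (A : Type*) [Ring A] [Algebra ℝ A]
    (ξ : Fin n → A) (ρ : Fin n → Fin n → A)
    (Dξ : Fin n → A) (Dρ : Fin n → Fin n → A)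
    (hρa : ∀ a b, ρ a b = - ρ b a)
    (hDρa : ∀ a b, Dρ a b = - Dρ b a)
    (hξξ : ∀ a b, ξ a * ξ b = - (ξ b * ξ a))
    (hξρ : ∀ a b c, ξ a * ρ b c = - (ρ b c * ξ a))
    (hρρ : ∀ a b c d, ρ a b * ρ c d = - (ρ c d * ρ a b))
    (hDξc : ∀ a x, Dξ a * x = x * Dξ a)
    (hDρc : ∀ a b x, Dρ a b * x = x * Dρ a b)
    (d : A →ₗ[ℝ] A)
    (hdξ : ∀ a, d (ξ a) = Dξ a)
    (hdρ : ∀ a b, d (ρ a b) = Dρ a b)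
    (hdDξ : ∀ a, d (Dξ a) = 0)
    (hdDρ : ∀ a b, d (Dρ a b) = 0)
    (hdLξ : ∀ a x, d (ξ a * x) = Dξ a * x - ξ a * d x)
    (hdLρ : ∀ a b x, d (ρ a b * x) = Dρ a b * x - ρ a b * d x)
    (hdLDξ : ∀ a x, d (Dξ a * x) = Dξ a * d x)
    (hdLDρ : ∀ a b x, d (Dρ a b * x) = Dρ a b * d x) :
    d (∑ a, ∑ b, Vtwo ξ a b * Dρ a b)
      = ∑ a, ∑ b, ∑ c, Vthree ξ a b c * (Dξ a * Dρ b c) := by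
  obtain ⟨k, hk3⟩ : ∃ k, n - 3 = k := ⟨n - 3, rfl⟩
  have hk2 : n - 2 = k + 1 := by omega
  have hcomm : ∀ (c : Fin n) (x z : A), x * (Dξ c * z) = Dξ c * (x * z) := by
    intro c x z; rw [hDξc c (x * z), mul_assoc, ← hDξc c z]
  have key : ∀ p q : Fin n, d (Vtwo ξ p q * Dρ p q)
      = ∑ c : Fin n, Vthree ξ c p q * (Dξ c * Dρ p q) := by
    intro p q
    have hd1 : ∀ f : Fin (k+1) → Fin n,
        d ((List.ofFn fun j => ξ (f j)).prod * Dρ p q)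
          = ∑ j : Fin (k+1), ((-1:ℝ)^(j:ℕ)) •
              (Dξ (f j) * ((List.ofFn fun i => ξ (f (j.succAbove i))).prod * Dρ p q)) :=
      fun f => dQ ξ Dξ d hDξc hdLξ k f _ (hdDρ p q)
    have hmid : (∑ f : Fin (k+1) → Fin n, eps (cat2 p q (f ∘ Fin.cast hk2)) •
          ∑ j : Fin (k+1), ((-1:ℝ)^(j:ℕ)) •
            (Dξ (f j) * ((List.ofFn fun i => ξ (f (j.succAbove i))).prod * Dρ p q)))
        = (k+1) • ∑ a : Fin n, ∑ g : Fin k → Fin n,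
            eps (cat3 a p q (g ∘ Fin.cast hk3)) •
              (Dξ a * ((List.ofFn fun i => ξ (g i)).prod * Dρ p q)) := by
      calc (∑ f : Fin (k+1) → Fin n, eps (cat2 p q (f ∘ Fin.cast hk2)) •
              ∑ j : Fin (k+1), ((-1:ℝ)^(j:ℕ)) •
                (Dξ (f j) * ((List.ofFn fun i => ξ (f (j.succAbove i))).prod * Dρ p q)))
          = ∑ j : Fin (k+1), ∑ f : Fin (k+1) → Fin n,
              (eps (cat2 p q (f ∘ Fin.cast hk2)) * (-1:ℝ)^(j:ℕ)) •
                (Dξ (f j) * ((List.ofFn fun i => ξ (f (j.succAbove i))).prod * Dρ p q)) := by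
            simp only [Finset.smul_sum, smul_smul]
            exact Finset.sum_comm
        _ = ∑ _j : Fin (k+1), ∑ a : Fin n, ∑ g : Fin k → Fin n,
              eps (cat3 a p q (g ∘ Fin.cast hk3)) •
                (Dξ a * ((List.ofFn fun i => ξ (g i)).prod * Dρ p q)) := by
            apply Finset.sum_congr rfl
            intro j _
            calc (∑ f : Fin (k+1) → Fin n,
                    (eps (cat2 p q (f ∘ Fin.cast hk2)) * (-1:ℝ)^(j:ℕ)) •
                      (Dξ (f j) * ((List.ofFn fun i => ξ (f (j.succAbove i))).prod * Dρ p q)))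
                = ∑ f : Fin (k+1) → Fin n,
                    eps (cat3 (f j) p q ((fun i => f (j.succAbove i)) ∘ Fin.cast hk3)) •
                      (Dξ (f j) * ((List.ofFn fun i => ξ (f (j.succAbove i))).prod * Dρ p q)) :=
                  Finset.sum_congr rfl fun f _ => by rw [eps_sign hk2 hk3 hn p q f j]
              _ = ∑ ag : Fin n × (Fin k → Fin n),
                    eps (cat3 ag.1 p q (ag.2 ∘ Fin.cast hk3)) •
                      (Dξ ag.1 * ((List.ofFn fun i => ξ (ag.2 i)).prod * Dρ p q)) :=
                  Fintype.sum_equiv ((Fin.insertNthEquiv (fun _ => Fin n) j).symm) _ _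
                    (fun f => rfl)
              _ = ∑ a : Fin n, ∑ g : Fin k → Fin n,
                    eps (cat3 a p q (g ∘ Fin.cast hk3)) •
                      (Dξ a * ((List.ofFn fun i => ξ (g i)).prod * Dρ p q)) :=
                  Fintype.sum_prod_type _
        _ = (k+1) • ∑ a : Fin n, ∑ g : Fin k → Fin n,
              eps (cat3 a p q (g ∘ Fin.cast hk3)) •
                (Dξ a * ((List.ofFn fun i => ξ (g i)).prod * Dρ p q)) := by
            rw [Finset.sum_const, Finset.card_univ, Fintype.card_fin]
    calc d (Vtwo ξ p q * Dρ p q)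
        = (((k+1).factorial : ℝ))⁻¹ • ∑ f : Fin (k+1) → Fin n,
            eps (cat2 p q (f ∘ Fin.cast hk2)) •
              d ((List.ofFn fun j => ξ (f j)).prod * Dρ p q) := by
          rw [Vtwo_cast hk2, smul_mul_assoc, map_smul, Finset.sum_mul, map_sum]
          congr 1
          apply Finset.sum_congr rfl
          intro f _
          rw [smul_mul_assoc, map_smul]
      _ = (((k+1).factorial : ℝ))⁻¹ • (∑ f : Fin (k+1) → Fin n,
            eps (cat2 p q (f ∘ Fin.cast hk2)) •
              ∑ j : Fin (k+1), ((-1:ℝ)^(j:ℕ)) •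
                (Dξ (f j) * ((List.ofFn fun i => ξ (f (j.succAbove i))).prod * Dρ p q))) := by
          simp only [hd1]
      _ = (((k+1).factorial : ℝ))⁻¹ • ((k+1) • ∑ a : Fin n, ∑ g : Fin k → Fin n,
            eps (cat3 a p q (g ∘ Fin.cast hk3)) •
              (Dξ a * ((List.ofFn fun i => ξ (g i)).prod * Dρ p q))) := by
          rw [hmid]
      _ = ((k.factorial : ℝ))⁻¹ • ∑ a : Fin n, ∑ g : Fin k → Fin n,
            eps (cat3 a p q (g ∘ Fin.cast hk3)) •
              (Dξ a * ((List.ofFn fun i => ξ (g i)).prod * Dρ p q)) := by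
          rw [← Nat.cast_smul_eq_nsmul ℝ, smul_smul]
          congr 1
          have hkf : (((k+1).factorial : ℕ) : ℝ)
              = ((k+1 : ℕ) : ℝ) * ((k.factorial : ℕ) : ℝ) := by
            exact_mod_cast Nat.factorial_succ k
          have h1 : ((k+1 : ℕ) : ℝ) ≠ 0 := Nat.cast_ne_zero.2 (by omega)
          have h2 : ((k.factorial : ℕ) : ℝ) ≠ 0 := Nat.cast_ne_zero.2 (Nat.factorial_ne_zero k)
          rw [hkf, mul_inv]
          field_simp
      _ = ∑ c : Fin n, Vthree ξ c p q * (Dξ c * Dρ p q) := by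
          rw [Finset.smul_sum]
          apply Finset.sum_congr rfl
          intro c _
          rw [Vthree_cast hk3, smul_mul_assoc, Finset.sum_mul]
          congr 1
          apply Finset.sum_congr rfl
          intro g _
          rw [smul_mul_assoc, hcomm]
  simp only [map_sum]
  simp only [key]
  calc (∑ p : Fin n, ∑ q : Fin n, ∑ c : Fin n, Vthree ξ c p q * (Dξ c * Dρ p q))
      = ∑ p : Fin n, ∑ c : Fin n, ∑ q : Fin n, Vthree ξ c p q * (Dξ c * Dρ p q) :=
        Finset.sum_congr rfl fun p _ => Finset.sum_comm
    _ = ∑ c : Fin n, ∑ p : Fin n, ∑ q : Fin n, Vthree ξ c p q * (Dξ c * Dρ p q) :=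
        Finset.sum_comm
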